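/- Let X ⊆ 𝒜^{ℤ^d} be a subshift and let Φ = (Φ_Λ) be a translation-invariant, absolutely summable interaction potential such that the function f = A_Φ := −Σ_{Λ∈𝓢, 0∈Λ} (1/|Λ|) Φ_Λ belongs to SV_d(X). Then for every nonempty finite Λ ⊆ ℤ^d, every Borel set A ⊆ X and every x ∈ X, the kernel γ_Λ associated to f satisfies γ_Λ(A|x) = [Σ_{ω∈𝒜^Λ} e^{−H^Φ_Λ(ω x_{Λ^c})} 1{ω x_{Λ^c} ∈ A}] / [Σ_{η∈𝒜^Λ} e^{−H^Φ_Λ(η x_{Λ^c})} 1{η x_{Λ^c} ∈ X}], where H^Φ_Λ = Σ_{Δ∈𝓢, Δ∩Λ≠∅} Φ_Δ is the Hamiltonian in Λ. -/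

import Mathlib

open MeasureTheory Filter Topology

/-- The full shift configuration space `𝒜^{ℤ^d}`. -/
abbrev Config (d : ℕ) (A : Type*) := (Fin d → ℤ) → A

/-- The shift action of `ℤ^d`: `(T^k x)_i = x_{i+k}`. -/
def shift {d : ℕ} {A : Type*} (k : Fin d → ℤ) (x : Config d A) : Config d A :=
  fun i => x (i + k)

/-- The ℓ∞ norm of a lattice point, `‖k‖_∞ = max_i |k_i|`. -/
def normInf {d : ℕ} (k : Fin d → ℤ) : ℕ :=
  Finset.univ.sup fun i => (k i).natAbs

/-- The box `Λ_N = {k : ‖k‖_∞ ≤ N}` as a finset. -/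
noncomputable def boxF (d N : ℕ) : Finset (Fin d → ℤ) :=
  Finset.Icc (fun _ => -(N : ℤ)) (fun _ => (N : ℤ))

/-- The `n`-th variation of `f` on a subshift `X`:
`δ_n(f) = sup {|f x - f y| : x, y ∈ X, x_{Λ_n} = y_{Λ_n}}`. -/
noncomputable def deltaVar {d : ℕ} {A : Type*} (X : Set (Config d A))
    (f : Config d A → ℝ) (n : ℕ) : ℝ :=
  sSup {r : ℝ | ∃ x ∈ X, ∃ y ∈ X,
    (∀ k : Fin d → ℤ, normInf k ≤ n → x k = y k) ∧ r = |f x - f y|}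

/-- `f` is bounded on `X`. -/
def BoundedOn {d : ℕ} {A : Type*} (X : Set (Config d A)) (f : Config d A → ℝ) : Prop :=
  ∃ C : ℝ, ∀ x ∈ X, |f x| ≤ C

/-- Membership in `SV_d(X)`: bounded with `Σ_{n ≥ 1} n^{d-1} δ_n(f) < ∞`. -/
def MemSV (d : ℕ) {A : Type*} (X : Set (Config d A)) (f : Config d A → ℝ) : Prop :=
  BoundedOn X f ∧ Summable fun n : ℕ => ((n : ℝ) + 1) ^ (d - 1) * deltaVar X f (n + 1)

/-- The sup norm of `f` over `X`. -/
noncomputable def supNormOn {d : ℕ} {A : Type*} (X : Set (Config d A))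
    (f : Config d A → ℝ) : ℝ :=
  sSup {r : ℝ | ∃ x ∈ X, r = |f x|}

/-- The `SV_d` norm: `‖f‖_{SV_d} = ‖f‖_∞ + Σ_{n ≥ 1} n^{d-1} δ_n(f)`. -/
noncomputable def svNorm (d : ℕ) {A : Type*} (X : Set (Config d A))
    (f : Config d A → ℝ) : ℝ :=
  supNormOn X f + ∑' n : ℕ, ((n : ℝ) + 1) ^ (d - 1) * deltaVar X f (n + 1)

/-- The Gibbs relation `𝔗`: pairs of points of `X` that agree outside a finite set. -/
def gibbsRel {d : ℕ} {A : Type*} (X : Set (Config d A)) :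
    Set (Config d A × Config d A) :=
  {p | p.1 ∈ X ∧ p.2 ∈ X ∧ ∃ Λ : Finset (Fin d → ℤ), ∀ k ∉ Λ, p.1 k = p.2 k}

/-- The cocycle `φ_f(x,y) = Σ_{k ∈ ℤ^d} (f(T^k y) - f(T^k x))` (unordered sum). -/
noncomputable def phiF {d : ℕ} {A : Type*} (f : Config d A → ℝ)
    (x y : Config d A) : ℝ :=
  ∑' k : Fin d → ℤ, (f (shift k y) - f (shift k x))

/-- Membership in `𝓕(X)`: homeomorphisms of `X` changing only finitely many coordinates,
uniformly. -/
def memF {d : ℕ} {A : Type*} [TopologicalSpace A] (X : Set (Config d A))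
    (φ : ↥X ≃ₜ ↥X) : Prop :=
  ∃ n : ℕ, 1 ≤ n ∧ ∀ x : ↥X, ∀ k : Fin d → ℤ, n < normInf k → (φ x).1 k = x.1 k

/-- `𝓕_n(X)`. -/
def Fn {d : ℕ} {A : Type*} [TopologicalSpace A] (X : Set (Config d A)) (n : ℕ) :
    Set (↥X ≃ₜ ↥X) :=
  {φ | (∀ x : ↥X, ∀ k : Fin d → ℤ, n < normInf k → (φ x).1 k = x.1 k) ∧
    ∀ x y : ↥X,
      ((∀ k : Fin d → ℤ, normInf k ≤ n → x.1 k = y.1 k) ↔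
        (∀ k : Fin d → ℤ, normInf k ≤ n → (φ x).1 k = (φ y).1 k))}

/-- The configuration `ω x_{Λ^c}`: equal to `ω` on `Λ` and to `x` off `Λ`. -/
def patch {d : ℕ} {A : Type*} (Λ : Finset (Fin d → ℤ)) (ω : {k // k ∈ Λ} → A)
    (x : Config d A) : Config d A :=
  fun k => if h : k ∈ Λ then ω ⟨k, h⟩ else x k

/-- `f_n = Σ_{i ∈ Λ_n} f ∘ T^i`. -/
noncomputable def fnSum (d : ℕ) {A : Type*} (f : Config d A → ℝ) (n : ℕ)
    (z : Config d A) : ℝ :=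
  ∑ i ∈ boxF d n, f (shift i z)

/-- The σ-algebra `𝓕_Δ` on `X`, generated by the coordinate projections `x ↦ x_i`, `i ∈ Δ`. -/
def cylSigma {d : ℕ} {A : Type*} [MeasurableSpace A] (X : Set (Config d A))
    (Δ : Set (Fin d → ℤ)) : MeasurableSpace ↥X :=
  MeasurableSpace.comap (fun (x : ↥X) (i : ↥Δ) => x.1 i.1) MeasurableSpace.pi

/-- `μ` is a Gibbs measure for `f`: `(φ_f, 𝔗)`-conformal. -/
def IsGibbs (d : ℕ) {A : Type*} [MeasurableSpace A] (X : Set (Config d A))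
    (f : Config d A → ℝ) (μ : Measure ↥X) : Prop :=
  ∀ V W : ↥X → ↥X, Measurable V → Measurable W →
    (∀ x, W (V x) = x) → (∀ x, V (W x) = x) →
    (∀ x : ↥X, ((x.1, (V x).1) ∈ gibbsRel X)) →
    (Measure.map V μ ≪ μ ∧
      ∀ᵐ x ∂μ, (Measure.map V μ).rnDeriv μ x
        = ENNReal.ofReal (Real.exp (phiF f x.1 (W x).1)))

/-- `μ` is a topological Gibbs measure for `f`: `(φ_f|_{𝔗⁰}, 𝔗⁰)`-conformal. -/
def IsTopGibbs (d : ℕ) {A : Type*} [TopologicalSpace A] [MeasurableSpace A]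
    (X : Set (Config d A)) (f : Config d A → ℝ) (μ : Measure ↥X) : Prop :=
  ∀ φ : ↥X ≃ₜ ↥X, memF X φ →
    (Measure.map (⇑φ) μ ≪ μ ∧
      ∀ᵐ x ∂μ, (Measure.map (⇑φ) μ).rnDeriv μ x
        = ENNReal.ofReal (Real.exp (phiF f x.1 (φ.symm x).1)))

/-- Finite-volume Gibbsian ratios defining the kernel `γ_Λ`. -/
noncomputable def gammaFn (d : ℕ) {A : Type*} [Fintype A] (X : Set (Config d A))
    (f : Config d A → ℝ) (Λ : Finset (Fin d → ℤ)) (S : Set ↥X) (x : Config d A)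
    (n : ℕ) : ℝ :=
  (∑ ω : {k // k ∈ Λ} → A,
      (Subtype.val '' S).indicator (fun z => Real.exp (fnSum d f n z)) (patch Λ ω x)) /
  (∑ η : {k // k ∈ Λ} → A,
      X.indicator (fun z => Real.exp (fnSum d f n z)) (patch Λ η x))

/-- The kernel `γ_Λ(S | x)`, defined as the limit of the finite-volume ratios. -/
noncomputable def gamma (d : ℕ) {A : Type*} [Fintype A] (X : Set (Config d A))
    (f : Config d A → ℝ) (Λ : Finset (Fin d → ℤ)) (S : Set ↥X) (x : Config d A) : ℝ :=
  limUnder atTop (gammaFn d X f Λ S x)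

/-- `X` is a subshift of finite type. -/
def IsSFT {d : ℕ} {A : Type*} (X : Set (Config d A)) : Prop :=
  ∃ n : ℕ, 1 ≤ n ∧ ∃ F : Set ({k : Fin d → ℤ // normInf k ≤ n} → A),
    X = {x : Config d A |
      ∀ l : Fin d → ℤ, (fun k : {k : Fin d → ℤ // normInf k ≤ n} => shift l x k.1) ∉ F}

/-- The topological Gibbs relation `𝔗⁰`. -/
def topGibbsRel {d : ℕ} {A : Type*} [TopologicalSpace A] (X : Set (Config d A)) :
    Set (Config d A × Config d A) :=
  {p | ∃ (hx : p.1 ∈ X) (φ : ↥X ≃ₜ ↥X), memF X φ ∧ (φ ⟨p.1, hx⟩).1 = p.2}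

/-- `f` is a local function on `X`. -/
def IsLocal {d : ℕ} {A : Type*} (X : Set (Config d A)) (f : Config d A → ℝ) : Prop :=
  ∃ Λ : Finset (Fin d → ℤ), ∀ x ∈ X, ∀ y ∈ X, (∀ k ∈ Λ, x k = y k) → f x = f y


lemma tendsto_powerset_atTop' {ι : Type*} [DecidableEq ι] :
    Tendsto (fun Δ : Finset ι => Δ.powerset) atTop atTop := by
  apply tendsto_atTop_atTop.2
  intro B
  refine ⟨B.sup id, fun Δ hΔ Δ' hΔ' => ?_⟩
  rw [Finset.mem_powerset]
  exact (Finset.le_sup (f := id) hΔ').trans hΔ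

lemma hasSum_of_powerset_tendsto {ι : Type*} [DecidableEq ι] {g : Finset ι → ℝ} {s : ℝ}
    (hg : ∀ Δ, 0 ≤ g Δ)
    (h : Tendsto (fun Δ : Finset ι => ∑ Δ' ∈ Δ.powerset, g Δ') atTop (nhds s)) :
    HasSum g s := by
  have hmono : Monotone (fun Δ : Finset ι => ∑ Δ' ∈ Δ.powerset, g Δ') := fun a b hab =>
    Finset.sum_le_sum_of_subset_of_nonneg (Finset.powerset_mono.2 hab) (fun _ _ _ => hg _)
  refine hasSum_of_isLUB_of_nonneg s hg ?_
  constructor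
  · rintro r ⟨T, rfl⟩
    calc ∑ Δ' ∈ T, g Δ' ≤ ∑ Δ' ∈ (T.sup id).powerset, g Δ' := by
          refine Finset.sum_le_sum_of_subset_of_nonneg (fun Δ' hΔ' => ?_) (fun _ _ _ => hg _)
          rw [Finset.mem_powerset]; exact Finset.le_sup (f := id) hΔ'
    _ ≤ s := hmono.ge_of_tendsto h _
  · intro b hb
    exact le_of_tendsto h (Eventually.of_forall fun Δ => hb ⟨Δ.powerset, rfl⟩)

lemma hasSum_of_powerset_tendsto_of_summable {ι : Type*} [DecidableEq ι] {g : Finset ι → ℝ} {s : ℝ}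
    (hg : Summable g)
    (h : Tendsto (fun Δ : Finset ι => ∑ Δ' ∈ Δ.powerset, g Δ') atTop (nhds s)) :
    HasSum g s := by
  obtain ⟨t, ht⟩ := hg
  have h2 : Tendsto (fun Δ : Finset ι => ∑ Δ' ∈ Δ.powerset, g Δ') atTop (nhds t) :=
    ht.comp tendsto_powerset_atTop'
  rwa [tendsto_nhds_unique h2 h] at ht

open Classical in
/-- For a translation-invariant, absolutely summable interaction
potential `Φ` with `f = A_Φ = −Σ_{Λ ∋ 0} (1/|Λ|) Φ_Λ ∈ SV_d(X)`, the kernel `γ_Λ`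
associated to `f` is the Boltzmann–Gibbs kernel of the Hamiltonian
`H^Φ_Λ = Σ_{Δ ∩ Λ ≠ ∅} Φ_Δ`. -/
theorem gamma_eq_boltzmann_of_potential {d : ℕ} (hd : 1 ≤ d) {A : Type*} [Fintype A]
    [Nonempty A] [TopologicalSpace A] [DiscreteTopology A] [MeasurableSpace A]
    [BorelSpace A]
    (X : Set (Config d A)) (hne : X.Nonempty) (hcl : IsClosed X)
    (hinv : ∀ k : Fin d → ℤ, ∀ x ∈ X, shift k x ∈ X)
    (Φ : Finset (Fin d → ℤ) → Config d A → ℝ)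
    -- each `Φ_Λ` is `𝓕_Λ`-measurable on `X`
    (hmeas : ∀ Λ : Finset (Fin d → ℤ),
      @Measurable ↥X ℝ (cylSigma X (↑Λ : Set (Fin d → ℤ))) _
        (fun y : ↥X => Φ Λ y.1))
    -- the Hamiltonians `H^Φ_Λ(x) = Σ_{Δ' ∈ 𝓢, Δ' ∩ Λ ≠ ∅} Φ_{Δ'}(x)` exist
    (H : Finset (Fin d → ℤ) → Config d A → ℝ)
    (hH : ∀ Λ : Finset (Fin d → ℤ), ∀ x ∈ X,
      Tendsto (fun Δ : Finset (Fin d → ℤ) =>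
          ∑ Δ' ∈ Δ.powerset.filter (fun Δ' => Δ'.Nonempty ∧ (Δ' ∩ Λ).Nonempty), Φ Δ' x)
        atTop (nhds (H Λ x)))
    -- translation invariance: `Φ_Λ ∘ T^i = Φ_{Λ + i}`
    (htrans : ∀ (Λ : Finset (Fin d → ℤ)) (i : Fin d → ℤ), ∀ x ∈ X,
      Φ Λ (shift i x) = Φ (Λ.image (fun k => k + i)) x)
    -- absolute summability
    (hbd : ∀ Λ : Finset (Fin d → ℤ), ∃ C : ℝ, ∀ x ∈ X, |Φ Λ x| ≤ C)
    (habs : ∀ i : Fin d → ℤ, ∃ s : ℝ, Tendsto (fun Δ : Finset (Fin d → ℤ) =>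
        ∑ Λ ∈ Δ.powerset.filter (fun Λ => Λ.Nonempty ∧ i ∈ Λ), supNormOn X (Φ Λ))
      atTop (nhds s))
    -- `f = A_Φ := −Σ_{Λ ∈ 𝓢, 0 ∈ Λ} (1/|Λ|) Φ_Λ`
    (f : Config d A → ℝ)
    (hfA : ∀ x ∈ X, Tendsto (fun Δ : Finset (Fin d → ℤ) =>
        ∑ Λ ∈ Δ.powerset.filter (fun Λ => Λ.Nonempty ∧ (0 : Fin d → ℤ) ∈ Λ),
          (1 / (Λ.card : ℝ)) * Φ Λ x)
      atTop (nhds (-(f x))))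
    (hf : MemSV d X f)
    (Λ : Finset (Fin d → ℤ)) (hΛ : Λ.Nonempty) (S : Set ↥X) (hS : MeasurableSet S)
    (x : Config d A) (hx : x ∈ X) :
    gamma d X f Λ S x =
      (∑ ω : {k // k ∈ Λ} → A,
          (Subtype.val '' S).indicator (fun z => Real.exp (-(H Λ z))) (patch Λ ω x)) /
      (∑ η : {k // k ∈ Λ} → A,
          X.indicator (fun z => Real.exp (-(H Λ z))) (patch Λ η x)) := by
  classical
  -- Step 1: sup norm bounds
  have hsupb : ∀ (Λ' : Finset (Fin d → ℤ)), ∀ y ∈ X, |Φ Λ' y| ≤ supNormOn X (Φ Λ') := by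
    intro Λ' y hy
    apply le_csSup
    · obtain ⟨C, hC⟩ := hbd Λ'
      exact ⟨C, by rintro r ⟨w, hw, rfl⟩; exact hC w hw⟩
    · exact ⟨y, hy, rfl⟩
  have hsup0 : ∀ Λ' : Finset (Fin d → ℤ), 0 ≤ supNormOn X (Φ Λ') := fun Λ' =>
    le_trans (abs_nonneg _) (hsupb Λ' hne.choose hne.choose_spec)
  -- Step 2: summable majorants
  have hFi : ∀ i : Fin d → ℤ, Summable (fun Λ' : Finset (Fin d → ℤ) =>
      if Λ'.Nonempty ∧ i ∈ Λ' then supNormOn X (Φ Λ') else 0) := by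
    intro i
    obtain ⟨s, hs⟩ := habs i
    have hnn : ∀ Δ : Finset (Fin d → ℤ),
        0 ≤ (if Δ.Nonempty ∧ i ∈ Δ then supNormOn X (Φ Δ) else 0) := by
      intro Δ; split_ifs; exacts [hsup0 _, le_rfl]
    have hs' : Tendsto (fun Δ : Finset (Fin d → ℤ) => ∑ Δ' ∈ Δ.powerset,
        if Δ'.Nonempty ∧ i ∈ Δ' then supNormOn X (Φ Δ') else 0) atTop (nhds s) :=
      hs.congr (fun Δ => Finset.sum_filter _ _)
    exact ⟨s, hasSum_of_powerset_tendsto hnn hs'⟩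
  have hG : Summable (fun Λ'' : Finset (Fin d → ℤ) =>
      if Λ''.Nonempty ∧ (Λ'' ∩ Λ).Nonempty then supNormOn X (Φ Λ'') else 0) := by
    have hsum : Summable (fun Λ'' : Finset (Fin d → ℤ) =>
        ∑ i ∈ Λ, if Λ''.Nonempty ∧ i ∈ Λ'' then supNormOn X (Φ Λ'') else 0) :=
      summable_sum (fun i _ => hFi i)
    refine Summable.of_nonneg_of_le (fun Λ'' => ?_) (fun Λ'' => ?_) hsum
    · split_ifs; exacts [hsup0 _, le_rfl]
    · by_cases h : Λ''.Nonempty ∧ (Λ'' ∩ Λ).Nonempty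
      · obtain ⟨j, hj⟩ := h.2
        rw [Finset.mem_inter] at hj
        rw [if_pos h]
        have h1 : supNormOn X (Φ Λ'') =
            (if Λ''.Nonempty ∧ j ∈ Λ'' then supNormOn X (Φ Λ'') else 0) :=
          (if_pos ⟨h.1, hj.1⟩).symm
        conv_lhs => rw [h1]
        refine Finset.single_le_sum
          (f := fun k => if Λ''.Nonempty ∧ k ∈ Λ'' then supNormOn X (Φ Λ'') else 0)
          (fun k _ => ?_) hj.2
        split_ifs; exacts [hsup0 _, le_rfl]
      · rw [if_neg h]
        exact Finset.sum_nonneg (fun k _ => by split_ifs; exacts [hsup0 _, le_rfl])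
  -- Step 3: Hamiltonian HasSum
  have hHsum : ∀ y ∈ X, HasSum (fun Δ' : Finset (Fin d → ℤ) =>
      if Δ'.Nonempty ∧ (Δ' ∩ Λ).Nonempty then Φ Δ' y else 0) (H Λ y) := by
    intro y hy
    apply hasSum_of_powerset_tendsto_of_summable
    · refine Summable.of_abs (Summable.of_nonneg_of_le (fun Δ' => abs_nonneg _)
        (fun Δ' => ?_) hG)
      split_ifs with hc
      · exact hsupb _ y hy
      · simp
    · exact (hH Λ y hy).congr (fun Δ => Finset.sum_filter _ _)
  -- Step 4: f as a sum
  have hf8 : ∀ y ∈ X, HasSum (fun Λ' : Finset (Fin d → ℤ) =>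
      if Λ'.Nonempty ∧ (0 : Fin d → ℤ) ∈ Λ' then (1 / (Λ'.card : ℝ)) * Φ Λ' y else 0)
      (-(f y)) := by
    intro y hy
    apply hasSum_of_powerset_tendsto_of_summable
    · refine Summable.of_abs (Summable.of_nonneg_of_le (fun Λ' => abs_nonneg _)
        (fun Λ' => ?_) (hFi 0))
      split_ifs with hc
      · rw [abs_mul]
        have hc1 : (1 : ℝ) ≤ (Λ'.card : ℝ) := by
          exact_mod_cast Nat.one_le_iff_ne_zero.2 (Finset.card_ne_zero_of_mem hc.2)
        calc |1 / (Λ'.card : ℝ)| * |Φ Λ' y| ≤ 1 * |Φ Λ' y| := by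
              apply mul_le_mul_of_nonneg_right _ (abs_nonneg _)
              rw [abs_of_nonneg (by positivity), div_le_one (by linarith)]
              linarith
        _ = |Φ Λ' y| := one_mul _
        _ ≤ supNormOn X (Φ Λ') := hsupb _ y hy
      · simp
    · exact (hfA y hy).congr (fun Δ => Finset.sum_filter _ _)
  -- Step 5: translated version
  have hfshift : ∀ (i : Fin d → ℤ), ∀ y ∈ X,
      HasSum (fun Λ'' : Finset (Fin d → ℤ) =>
        if Λ''.Nonempty ∧ i ∈ Λ'' then (1 / (Λ''.card : ℝ)) * Φ Λ'' y else 0)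
      (-(f (shift i y))) := by
    intro i y hy
    have h8 := hf8 (shift i y) (hinv i y hy)
    have hfun : ((fun Λ'' : Finset (Fin d → ℤ) =>
        if Λ''.Nonempty ∧ i ∈ Λ'' then (1 / (Λ''.card : ℝ)) * Φ Λ'' y else 0) ∘
        (Equiv.finsetCongr (Equiv.addRight i)))
        = (fun Λ' : Finset (Fin d → ℤ) =>
          if Λ'.Nonempty ∧ (0 : Fin d → ℤ) ∈ Λ' then (1 / (Λ'.card : ℝ)) * Φ Λ' (shift i y) else 0) := by
      funext Λ'
      simp only [Function.comp_apply, Equiv.finsetCongr_apply]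
      have hmem : i ∈ Λ'.map (Equiv.addRight i).toEmbedding ↔ (0 : Fin d → ℤ) ∈ Λ' := by
        simp only [Finset.mem_map, Equiv.coe_toEmbedding, Equiv.coe_addRight]
        constructor
        · rintro ⟨a, ha, hai⟩
          have : a = 0 := by
            have := hai; simpa using congrArg (fun w => w - i) this
          rwa [← this]
        · intro h0; exact ⟨0, h0, by simp⟩
      have hnemp : (Λ'.map (Equiv.addRight i).toEmbedding).Nonempty ↔ Λ'.Nonempty :=
        Finset.map_nonempty
      have hcard : (Λ'.map (Equiv.addRight i).toEmbedding).card = Λ'.card :=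
        Finset.card_map _
      have hphi : Φ (Λ'.map (Equiv.addRight i).toEmbedding) y = Φ Λ' (shift i y) := by
        rw [htrans Λ' i y hy]
        congr 1
        rw [Finset.map_eq_image]
        rfl
      rw [hcard, hphi]
      exact if_congr (and_congr hnemp hmem) rfl rfl
    have hcomp : HasSum ((fun Λ'' : Finset (Fin d → ℤ) =>
        if Λ''.Nonempty ∧ i ∈ Λ'' then (1 / (Λ''.card : ℝ)) * Φ Λ'' y else 0) ∘
        (Equiv.finsetCongr (Equiv.addRight i))) (-(f (shift i y))) := by
      rw [hfun]; exact h8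
    exact (Equiv.hasSum_iff _).1 hcomp
  -- Step 6: locality of Φ
  have hlocal : ∀ (Λ'' : Finset (Fin d → ℤ)), ∀ y ∈ X, ∀ z ∈ X,
      (∀ k ∈ Λ'', y k = z k) → Φ Λ'' y = Φ Λ'' z := by
    intro Λ'' y hy z hz hagree
    have hms := hmeas Λ'' (measurableSet_singleton (Φ Λ'' y))
    obtain ⟨t, -, hpre⟩ := hms
    have h1 : (⟨y, hy⟩ : ↥X) ∈ (fun w : ↥X => Φ Λ'' w.1) ⁻¹' {Φ Λ'' y} := rfl
    rw [← hpre] at h1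
    have h2 : (fun i : ↥(↑Λ'' : Set (Fin d → ℤ)) => z i.1) ∈ t := by
      have he : (fun i : ↥(↑Λ'' : Set (Fin d → ℤ)) => y i.1)
           = (fun i : ↥(↑Λ'' : Set (Fin d → ℤ)) => z i.1) := by
        funext i; exact hagree i.1 i.2
      rw [← he]; exact h1
    have h3 : (⟨z, hz⟩ : ↥X) ∈ (fun w : ↥X => Φ Λ'' w.1) ⁻¹' {Φ Λ'' y} := by
      rw [← hpre]; exact h2
    exact (Set.mem_singleton_iff.1 h3).symm
  -- box membership
  have hmem_box : ∀ (n : ℕ) (k : Fin d → ℤ), k ∈ boxF d n ↔ normInf k ≤ n := by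
    intro n k
    rw [boxF, Finset.mem_Icc]
    have habsle : ∀ j : Fin d, ((k j).natAbs ≤ n ↔ -(n : ℤ) ≤ k j ∧ k j ≤ n) := by
      intro j; rw [← abs_le, Int.abs_eq_natAbs]; exact_mod_cast Iff.rfl
    constructor
    · rintro ⟨h1, h2⟩
      exact Finset.sup_le fun j _ => (habsle j).2 ⟨h1 j, h2 j⟩
    · intro hk
      have h := fun j => (habsle j).1
        (le_trans (Finset.le_sup (f := fun i => (k i).natAbs) (Finset.mem_univ j)) hk)
      exact ⟨fun j => (h j).1, fun j => (h j).2⟩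
  -- Step 7: the key limit
  have hdiff : ∀ y ∈ X, ∀ z ∈ X, (∀ k, k ∉ Λ → y k = z k) →
      Tendsto (fun n => fnSum d f n y - fnSum d f n z) atTop
        (nhds (H Λ z - H Λ y)) := by
    intro y hy z hz hyz
    set g : Finset (Fin d → ℤ) → ℝ := fun Λ'' =>
      if Λ''.Nonempty ∧ (Λ'' ∩ Λ).Nonempty then Φ Λ'' z - Φ Λ'' y else 0 with hgdef
    have hgsum : HasSum g (H Λ z - H Λ y) := by
      have hs := (hHsum z hz).sub (hHsum y hy)
      have he : (fun Δ' : Finset (Fin d → ℤ) =>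
          (if Δ'.Nonempty ∧ (Δ' ∩ Λ).Nonempty then Φ Δ' z else 0) -
          (if Δ'.Nonempty ∧ (Δ' ∩ Λ).Nonempty then Φ Δ' y else 0)) = g := by
        funext Δ'; rw [hgdef]; dsimp only; split_ifs <;> ring
      rwa [he] at hs
    set h : ℕ → Finset (Fin d → ℤ) → ℝ := fun n Λ'' => ∑ i ∈ boxF d n,
      (if Λ''.Nonempty ∧ i ∈ Λ'' then (1 / (Λ''.card : ℝ)) * (Φ Λ'' z - Φ Λ'' y) else 0)
      with hhdef
    -- Φ difference vanishes off Λ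
    have hvanish : ∀ Λ'' : Finset (Fin d → ℤ), ¬(Λ'' ∩ Λ).Nonempty →
        Φ Λ'' z - Φ Λ'' y = 0 := by
      intro Λ'' hint
      rw [sub_eq_zero]
      refine (hlocal Λ'' y hy z hz (fun k hk => ?_)).symm
      apply hyz
      intro hkΛ
      exact hint ⟨k, Finset.mem_inter.2 ⟨hk, hkΛ⟩⟩
    -- closed form of h n
    have hform : ∀ (n : ℕ) (Λ'' : Finset (Fin d → ℤ)),
        h n Λ'' = ((boxF d n ∩ Λ'').card : ℝ) *
          ((1 / (Λ''.card : ℝ)) * (Φ Λ'' z - Φ Λ'' y)) := by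
      intro n Λ''
      by_cases hne' : Λ''.Nonempty
      · rw [hhdef]
        simp only [hne', true_and]
        rw [Finset.sum_ite_mem, Finset.sum_const, nsmul_eq_mul]
      · rw [hhdef]
        simp only [hne', false_and, if_false, Finset.sum_const_zero]
        rw [Finset.not_nonempty_iff_eq_empty.1 hne']
        simp
    -- each h n sums to the fnSum difference
    have hhsum : ∀ n : ℕ, HasSum (h n) (fnSum d f n y - fnSum d f n z) := by
      intro n
      have hterm : ∀ i ∈ boxF d n, HasSum (fun Λ'' : Finset (Fin d → ℤ) =>
          if Λ''.Nonempty ∧ i ∈ Λ'' then (1 / (Λ''.card : ℝ)) * (Φ Λ'' z - Φ Λ'' y) else 0)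
          (f (shift i y) - f (shift i z)) := by
        intro i _
        have hsub := (hfshift i z hz).sub (hfshift i y hy)
        have : (fun Λ'' : Finset (Fin d → ℤ) =>
            (if Λ''.Nonempty ∧ i ∈ Λ'' then (1 / (Λ''.card : ℝ)) * Φ Λ'' z else 0) -
            (if Λ''.Nonempty ∧ i ∈ Λ'' then (1 / (Λ''.card : ℝ)) * Φ Λ'' y else 0))
            = (fun Λ'' : Finset (Fin d → ℤ) =>
            if Λ''.Nonempty ∧ i ∈ Λ'' then (1 / (Λ''.card : ℝ)) * (Φ Λ'' z - Φ Λ'' y) else 0) := by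
          funext Λ''; split_ifs <;> ring
        rw [this] at hsub
        rw [show f (shift i y) - f (shift i z) = -f (shift i z) - -f (shift i y) by ring]
        exact hsub
      have h2 := hasSum_sum hterm
      rw [Finset.sum_sub_distrib] at h2
      exact h2
    -- dominated convergence
    have hbound : ∀ (n : ℕ) (Λ'' : Finset (Fin d → ℤ)), ‖h n Λ''‖ ≤
        2 * (if Λ''.Nonempty ∧ (Λ'' ∩ Λ).Nonempty then supNormOn X (Φ Λ'') else 0) := by
      intro n Λ''
      by_cases hc : Λ''.Nonempty ∧ (Λ'' ∩ Λ).Nonempty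
      · rw [if_pos hc, hform]
        rw [Real.norm_eq_abs, abs_mul, abs_mul]
        have hcard_pos : (0 : ℝ) < (Λ''.card : ℝ) := by
          exact_mod_cast Finset.card_pos.2 hc.1
        have h1 : |((boxF d n ∩ Λ'').card : ℝ)| ≤ (Λ''.card : ℝ) := by
          rw [abs_of_nonneg (by positivity)]
          exact_mod_cast Finset.card_le_card (Finset.inter_subset_right)
        have h2 : |1 / (Λ''.card : ℝ)| = 1 / (Λ''.card : ℝ) := abs_of_nonneg (by positivity)
        have h3 : |Φ Λ'' z - Φ Λ'' y| ≤ 2 * supNormOn X (Φ Λ'') := by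
          calc |Φ Λ'' z - Φ Λ'' y| ≤ |Φ Λ'' z| + |Φ Λ'' y| := abs_sub _ _
          _ ≤ supNormOn X (Φ Λ'') + supNormOn X (Φ Λ'') :=
            add_le_add (hsupb _ z hz) (hsupb _ y hy)
          _ = 2 * supNormOn X (Φ Λ'') := by ring
        calc |((boxF d n ∩ Λ'').card : ℝ)| * (|1 / (Λ''.card : ℝ)| * |Φ Λ'' z - Φ Λ'' y|)
            ≤ (Λ''.card : ℝ) * ((1 / (Λ''.card : ℝ)) * (2 * supNormOn X (Φ Λ''))) := by
              apply mul_le_mul h1 _ (by positivity) (by positivity)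
              rw [h2]
              exact mul_le_mul_of_nonneg_left h3 (by positivity)
        _ = 2 * supNormOn X (Φ Λ'') := by field_simp
      · rw [if_neg hc, mul_zero]
        by_cases hne' : Λ''.Nonempty
        · have : ¬(Λ'' ∩ Λ).Nonempty := fun hh => hc ⟨hne', hh⟩
          rw [hform, hvanish Λ'' this]
          simp
        · rw [hform, Finset.not_nonempty_iff_eq_empty.1 hne']
          simp
    have hptwise : ∀ Λ'' : Finset (Fin d → ℤ),
        Tendsto (fun n => h n Λ'') atTop (nhds (g Λ'')) := by
      intro Λ''
      have hev : ∀ᶠ n in atTop, h n Λ'' = g Λ'' := by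
        rw [eventually_atTop]
        refine ⟨Λ''.sup normInf, fun n hn => ?_⟩
        have hsub : Λ'' ⊆ boxF d n := by
          intro k hk
          rw [hmem_box]
          exact le_trans (Finset.le_sup hk) hn
        have hinter : boxF d n ∩ Λ'' = Λ'' := Finset.inter_eq_right.2 hsub
        rw [hform, hinter, hgdef]
        dsimp only
        by_cases hne' : Λ''.Nonempty
        · have hcard_ne : ((Λ''.card : ℝ)) ≠ 0 := by
            exact_mod_cast Finset.card_ne_zero.2 hne'
          by_cases hc : (Λ'' ∩ Λ).Nonempty
          · rw [if_pos ⟨hne', hc⟩]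
            field_simp
          · rw [if_neg (fun hh : Λ''.Nonempty ∧ (Λ'' ∩ Λ).Nonempty => hc hh.2),
              hvanish Λ'' hc]
            ring
        · rw [Finset.not_nonempty_iff_eq_empty.1 hne']
          simp
      exact Tendsto.congr' (hev.mono fun n e => e.symm) tendsto_const_nhds
    have hmain := tendsto_tsum_of_dominated_convergence (hG.mul_left 2) hptwise
      (Eventually.of_forall hbound)
    have heq1 : ∀ n : ℕ, (∑' Λ'' : Finset (Fin d → ℤ), h n Λ'') =
        fnSum d f n y - fnSum d f n z := fun n => (hhsum n).tsum_eq
    have heq2 : (∑' Λ'' : Finset (Fin d → ℤ), g Λ'') = H Λ z - H Λ y := hgsum.tsum_eq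
    rw [heq2] at hmain
    exact hmain.congr heq1
  -- Step 8: assembly
  have hNSX : (Subtype.val '' S : Set (Config d A)) ⊆ X := by
    rintro _ ⟨⟨y, hy⟩, -, rfl⟩; exact hy
  have hterm : ∀ (s : Set (Config d A)), s ⊆ X → ∀ (ω : {k // k ∈ Λ} → A),
      Tendsto (fun n => Real.exp (-(fnSum d f n x)) *
          s.indicator (fun z => Real.exp (fnSum d f n z)) (patch Λ ω x)) atTop
        (nhds (if patch Λ ω x ∈ s then Real.exp (H Λ x - H Λ (patch Λ ω x)) else 0)) := by
    intro s hsX ω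
    by_cases hp : patch Λ ω x ∈ s
    · rw [if_pos hp]
      have hpX : patch Λ ω x ∈ X := hsX hp
      have hagree : ∀ k, k ∉ Λ → patch Λ ω x k = x k := by
        intro k hk
        simp [patch, dif_neg hk]
      have hT := hdiff (patch Λ ω x) hpX x hx hagree
      have hTexp := (Real.continuous_exp.tendsto _).comp hT
      refine hTexp.congr (fun n => ?_)
      rw [Function.comp_apply, Set.indicator_of_mem hp, ← Real.exp_add]
      congr 1
      ring
    · rw [if_neg hp]
      refine tendsto_const_nhds.congr (fun n => ?_)
      rw [Set.indicator_of_notMem hp, mul_zero]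
  set Lnum : ℝ := ∑ ω : {k // k ∈ Λ} → A,
    (if patch Λ ω x ∈ (Subtype.val '' S : Set (Config d A)) then
      Real.exp (H Λ x - H Λ (patch Λ ω x)) else 0) with hLnum
  set Lden : ℝ := ∑ η : {k // k ∈ Λ} → A,
    (if patch Λ η x ∈ X then Real.exp (H Λ x - H Λ (patch Λ η x)) else 0) with hLden
  have hnum : Tendsto (fun n => Real.exp (-(fnSum d f n x)) *
      ∑ ω : {k // k ∈ Λ} → A,
        (Subtype.val '' S).indicator (fun z => Real.exp (fnSum d f n z)) (patch Λ ω x))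
      atTop (nhds Lnum) := by
    have ht := tendsto_finset_sum (Finset.univ)
      (fun ω _ => hterm (Subtype.val '' S) hNSX ω)
    refine ht.congr (fun n => ?_)
    rw [Finset.mul_sum]
  have hden : Tendsto (fun n => Real.exp (-(fnSum d f n x)) *
      ∑ η : {k // k ∈ Λ} → A,
        X.indicator (fun z => Real.exp (fnSum d f n z)) (patch Λ η x))
      atTop (nhds Lden) := by
    have ht := tendsto_finset_sum (Finset.univ)
      (fun η _ => hterm X (subset_refl X) η)
    refine ht.congr (fun n => ?_)
    rw [Finset.mul_sum]
  have hLdenpos : 0 < Lden := by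
    rw [hLden]
    apply Finset.sum_pos'
    · intro η _; split_ifs; exacts [(Real.exp_pos _).le, le_rfl]
    · refine ⟨fun k => x k.1, Finset.mem_univ _, ?_⟩
      have hpx : patch Λ (fun k => x k.1) x = x := by
        funext k; by_cases h : k ∈ Λ <;> simp [patch, h]
      rw [hpx, if_pos hx]
      exact Real.exp_pos _
  have htend : Tendsto (gammaFn d X f Λ S x) atTop (nhds (Lnum / Lden)) := by
    have hdiv := hnum.div hden hLdenpos.ne'
    refine hdiv.congr (fun n => ?_)
    rw [Pi.div_apply]
    rw [mul_div_mul_left _ _ (Real.exp_ne_zero _)]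
    rfl
  rw [gamma, htend.limUnder_eq]
  have hnume : Lnum = Real.exp (H Λ x) * ∑ ω : {k // k ∈ Λ} → A,
      (Subtype.val '' S).indicator (fun z => Real.exp (-(H Λ z))) (patch Λ ω x) := by
    rw [hLnum, Finset.mul_sum]
    refine Finset.sum_congr rfl (fun ω _ => ?_)
    rw [Set.indicator_apply]
    split_ifs with h
    · rw [← Real.exp_add, sub_eq_add_neg]
    · rw [mul_zero]
  have hdene : Lden = Real.exp (H Λ x) * ∑ η : {k // k ∈ Λ} → A,
      X.indicator (fun z => Real.exp (-(H Λ z))) (patch Λ η x) := by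
    rw [hLden, Finset.mul_sum]
    refine Finset.sum_congr rfl (fun η _ => ?_)
    rw [Set.indicator_apply]
    split_ifs with h
    · rw [← Real.exp_add, sub_eq_add_neg]
    · rw [mul_zero]
  rw [hnume, hdene, mul_div_mul_left _ _ (Real.exp_ne_zero _)]
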